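/- Let n ≥ 2, d ≥ 1, α > 0, and let q = (q_1, …, q_n) be a configuration of n distinct points in ℝ^d. Suppose m̂_1, …, m̂_n > 0 and ĉ ∈ ℝ^d satisfy q_j = ĉ + ∑_{k≠j} m̂_k Q_{jk} for every j. Then ∑_{j=1}^n m̂_j ‖q_j − ĉ‖² = ∑_{1≤j<k≤n} m̂_j m̂_k ‖q_j − q_k‖^{−α}; in particular this quantity is strictly positive. Consequently, if positive masses m_1, …, m_n > 0 and λ ∈ ℝ \ {0} satisfy q_j = M^{-1} ∑_{k=1}^n m_k q_k − (α/λ) ∑_{k≠j} m_k Q_{jk} for every j (with M = ∑_k m_k), then λ < 0. -/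

import Mathlib

open Finset

lemma pair_key {n d : ℕ} (α : ℝ)
    (q : Fin n → EuclideanSpace ℝ (Fin d))
    (hq : ∀ i j, i ≠ j → q i ≠ q j)
    (Q : Fin n → Fin n → EuclideanSpace ℝ (Fin d))
    (hQ : ∀ j k, j ≠ k → Q j k = (‖q j - q k‖ ^ (α + 2))⁻¹ • (q j - q k))
    (c : EuclideanSpace ℝ (Fin d)) {j k : Fin n} (hjk : j ≠ k) :
    inner ℝ (q j - c) (Q j k) + inner ℝ (q k - c) (Q k j) =
      ‖q j - q k‖ ^ (-α) := by
  have hv : q j - q k ≠ 0 := sub_ne_zero.2 (hq j k hjk)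
  have hpos : (0:ℝ) < ‖q j - q k‖ := norm_pos_iff.2 hv
  have hQkj : Q k j = -Q j k := by
    rw [hQ j k hjk, hQ k j hjk.symm, ← smul_neg, neg_sub]
    congr 2
    rw [norm_sub_rev]
  rw [hQkj, inner_neg_right, ← sub_eq_add_neg, ← inner_sub_left,
      show q j - c - (q k - c) = q j - q k by abel, hQ j k hjk,
      real_inner_smul_right, real_inner_self_eq_norm_sq]
  rw [← Real.rpow_natCast ‖q j - q k‖ 2, ← Real.rpow_neg hpos.le,
      ← Real.rpow_add hpos]
  norm_num

lemma core {n d : ℕ} (α : ℝ)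
    (q : Fin n → EuclideanSpace ℝ (Fin d))
    (hq : ∀ i j, i ≠ j → q i ≠ q j)
    (Q : Fin n → Fin n → EuclideanSpace ℝ (Fin d))
    (hQ : ∀ j k, j ≠ k → Q j k = (‖q j - q k‖ ^ (α + 2))⁻¹ • (q j - q k))
    (w : Fin n → ℝ) (c : EuclideanSpace ℝ (Fin d))
    (heq : ∀ j, q j - c = ∑ k ∈ Finset.univ.erase j, w k • Q j k) :
    ∑ j, w j * ‖q j - c‖ ^ 2 =
      ∑ j, ∑ k ∈ Finset.univ.filter (fun k => j < k),
        w j * w k * ‖q j - q k‖ ^ (-α) := by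
  have step1 : ∀ j, w j * ‖q j - c‖ ^ 2 =
      ∑ k ∈ Finset.univ.erase j, w j * w k * inner ℝ (q j - c) (Q j k) := by
    intro j
    rw [← real_inner_self_eq_norm_sq]
    conv_lhs => rw [show (inner ℝ (q j - c) (q j - c) : ℝ) =
      inner ℝ (q j - c) (∑ k ∈ Finset.univ.erase j, w k • Q j k) by rw [← heq j]]
    rw [inner_sum, Finset.mul_sum]
    refine Finset.sum_congr rfl fun k _ => ?_
    rw [real_inner_smul_right]; ring
  simp only [step1]
  have split : ∀ j : Fin n, (Finset.univ.erase j) =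
      (Finset.univ.filter (fun k => j < k)) ∪ (Finset.univ.filter (fun k => k < j)) := by
    intro j
    ext k
    simp only [Finset.mem_erase, Finset.mem_union, Finset.mem_filter,
      Finset.mem_univ, true_and, and_true, ne_eq, Fin.ext_iff, Fin.lt_def]
    omega
  have hdisj : ∀ j : Fin n, Disjoint (Finset.univ.filter (fun k => j < k))
      (Finset.univ.filter (fun k : Fin n => k < j)) := by
    intro j
    rw [Finset.disjoint_left]
    intro a ha hb
    simp only [Finset.mem_filter] at ha hb
    exact absurd (ha.2.trans hb.2) (lt_irrefl j)
  have expand : ∑ j, ∑ k ∈ Finset.univ.erase j, w j * w k * inner ℝ (q j - c) (Q j k) =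
      (∑ j, ∑ k ∈ Finset.univ.filter (fun k => j < k), w j * w k * inner ℝ (q j - c) (Q j k)) +
      ∑ j, ∑ k ∈ Finset.univ.filter (fun k => k < j), w j * w k * inner ℝ (q j - c) (Q j k) := by
    rw [← Finset.sum_add_distrib]
    refine Finset.sum_congr rfl fun j _ => ?_
    rw [split j, Finset.sum_union (hdisj j)]
  have swap : (∑ j, ∑ k ∈ Finset.univ.filter (fun k => k < j),
        w j * w k * (inner ℝ (q j - c) (Q j k) : ℝ)) =
      ∑ j, ∑ k ∈ Finset.univ.filter (fun k => j < k), w k * w j * inner ℝ (q k - c) (Q k j) := by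
    refine Finset.sum_comm' fun x y => ?_
    simp only [Finset.mem_univ, Finset.mem_filter, true_and, and_true]
  rw [expand, swap, ← Finset.sum_add_distrib]
  refine Finset.sum_congr rfl fun j _ => ?_
  rw [← Finset.sum_add_distrib]
  refine Finset.sum_congr rfl fun k hk => ?_
  have hjk : j ≠ k := Fin.ne_of_lt (Finset.mem_filter.1 hk).2
  rw [← pair_key α q hq Q hQ c hjk]
  ring


lemma pos2 {n d : ℕ} (hn : 2 ≤ n) (α : ℝ)
    (q : Fin n → EuclideanSpace ℝ (Fin d))
    (hq : ∀ i j, i ≠ j → q i ≠ q j)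
    (m : Fin n → ℝ) (hm : ∀ j, 0 < m j) :
    0 < ∑ j, ∑ k ∈ Finset.univ.filter (fun k => j < k),
        m j * m k * ‖q j - q k‖ ^ (-α) := by
  have hterm : ∀ (j k : Fin n), j ≠ k → 0 < m j * m k * ‖q j - q k‖ ^ (-α) := by
    intro j k hjk
    have hpos : (0:ℝ) < ‖q j - q k‖ := norm_pos_iff.2 (sub_ne_zero.2 (hq j k hjk))
    exact mul_pos (mul_pos (hm j) (hm k)) (Real.rpow_pos_of_pos hpos _)
  refine Finset.sum_pos' (fun j _ => Finset.sum_nonneg fun k hk =>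
    (hterm j k (Fin.ne_of_lt (Finset.mem_filter.1 hk).2)).le) ?_
  refine ⟨⟨0, by omega⟩, Finset.mem_univ _, Finset.sum_pos' ?_ ?_⟩
  · intro k hk
    exact (hterm _ k (Fin.ne_of_lt (Finset.mem_filter.1 hk).2)).le
  · refine ⟨⟨1, by omega⟩, ?_, hterm _ _ ?_⟩
    · simp [Finset.mem_filter, Fin.lt_def]
    · simp [Fin.ext_iff]


theorem stmt1 (n d : ℕ) (hn : 2 ≤ n) (hd : 1 ≤ d) (α : ℝ) (hα : 0 < α)
    (q : Fin n → EuclideanSpace ℝ (Fin d))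
    (hq : ∀ i j, i ≠ j → q i ≠ q j)
    (Q : Fin n → Fin n → EuclideanSpace ℝ (Fin d))
    (hQ : ∀ j k, j ≠ k → Q j k = (‖q j - q k‖ ^ (α + 2))⁻¹ • (q j - q k))
    (mh : Fin n → ℝ) (ch : EuclideanSpace ℝ (Fin d)) (hmh : ∀ j, 0 < mh j)
    (heq : ∀ j, q j = ch + ∑ k ∈ Finset.univ.erase j, mh k • Q j k) :
    (∑ j, mh j * ‖q j - ch‖ ^ 2 =
      ∑ j, ∑ k ∈ Finset.univ.filter (fun k => j < k),
        mh j * mh k * ‖q j - q k‖ ^ (-α)) ∧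
    (0 < ∑ j, mh j * ‖q j - ch‖ ^ 2) ∧
    (∀ (m : Fin n → ℝ) (lam : ℝ), (∀ j, 0 < m j) → lam ≠ 0 →
      (∀ j, q j = (∑ k, m k)⁻¹ • (∑ k, m k • q k) -
        (α / lam) • ∑ k ∈ Finset.univ.erase j, m k • Q j k) → lam < 0) := by
  have h1 : ∑ j, mh j * ‖q j - ch‖ ^ 2 =
      ∑ j, ∑ k ∈ Finset.univ.filter (fun k => j < k),
        mh j * mh k * ‖q j - q k‖ ^ (-α) :=
    core α q hq Q hQ mh ch (fun j => by rw [heq j]; abel)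
  refine ⟨h1, by rw [h1]; exact pos2 hn α q hq mh hmh, ?_⟩
  intro m lam hm hlam heq3
  set β : ℝ := α / lam with hβ
  have hβne : β ≠ 0 := div_ne_zero hα.ne' hlam
  set c : EuclideanSpace ℝ (Fin d) := (∑ k, m k)⁻¹ • (∑ k, m k • q k) with hc
  have hcore := core α q hq Q hQ (fun k => -β * m k) c (fun j => by
    rw [heq3 j, hc, sub_sub_cancel_left, ← neg_smul, Finset.smul_sum]
    exact Finset.sum_congr rfl fun k _ => by rw [smul_smul])
  have hL : ∑ j, (-β * m j) * ‖q j - c‖ ^ 2 =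
      -β * ∑ j, m j * ‖q j - c‖ ^ 2 := by
    rw [Finset.mul_sum]; exact Finset.sum_congr rfl fun j _ => by ring
  have hR : (∑ j, ∑ k ∈ Finset.univ.filter (fun k => j < k),
        (-β * m j) * (-β * m k) * ‖q j - q k‖ ^ (-α)) =
      β ^ 2 * ∑ j, ∑ k ∈ Finset.univ.filter (fun k => j < k),
        m j * m k * ‖q j - q k‖ ^ (-α) := by
    rw [Finset.mul_sum]
    refine Finset.sum_congr rfl fun j _ => ?_
    rw [Finset.mul_sum]
    exact Finset.sum_congr rfl fun k _ => by ring
  rw [hL, hR] at hcore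
  have hS2 := pos2 hn α q hq m hm
  have hS1 : 0 ≤ ∑ j, m j * ‖q j - c‖ ^ 2 :=
    Finset.sum_nonneg fun j _ => mul_nonneg (hm j).le (by positivity)
  have hprod : 0 < -β * ∑ j, m j * ‖q j - c‖ ^ 2 := by
    rw [hcore]; exact mul_pos (by positivity) hS2
  have hβneg : β < 0 := by
    by_contra h
    push_neg at h
    have : -β * ∑ j, m j * ‖q j - c‖ ^ 2 ≤ 0 :=
      mul_nonpos_of_nonpos_of_nonneg (by linarith) hS1
    linarith
  rw [hβ, div_neg_iff] at hβneg
  rcases hβneg with ⟨_, h⟩ | ⟨h, _⟩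
  · exact h
  · linarith
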